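/- Let k ≥ 1 and let x ∈ W^{k,2}([0,1],ℝ^{2n}) satisfy the boundary conditions ∂_t^ℓ x(0), ∂_t^ℓ x(1) ∈ ℝⁿ for all even ℓ with 0 ≤ ℓ ≤ k−1 and ∂_t^ℓ x(0), ∂_t^ℓ x(1) ∈ iℝⁿ for all odd ℓ with 0 ≤ ℓ ≤ k−1. Define the loop γ_x : S¹(2) = ℝ/2ℤ → ℝ^{2n} by γ_x(t) = x(t) for t ∈ [0,1] and γ_x(t) = conj(x(2−t)) for t ∈ [1,2], where conj is complex conjugation on ℂⁿ ≅ ℝ^{2n}. Then γ_x ∈ W^{k,2}(S¹(2),ℝ^{2n}) and γ_x(2−t) = conj(γ_x(t)) for all t ∈ [0,2]. -/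

import Mathlib

open MeasureTheory Set

namespace NLGF

/-! ### Paths `[0,1] → ℝ^{2n} ≅ ℂⁿ` with Lagrangian boundary conditions on `ℝⁿ` -/

/-- `ℂⁿ ≅ ℝ^{2n}`, with real part `ℝⁿ`. -/
abbrev Cn (n : ℕ) := EuclideanSpace ℂ (Fin n)

/-- `v` lies in the real part `ℝⁿ ⊆ ℂⁿ`. -/
def RealVec (n : ℕ) (v : Cn n) : Prop := ∀ l, (v l).im = 0

/-- `v` lies in the imaginary part `iℝⁿ ⊆ ℂⁿ`. -/
def ImagVec (n : ℕ) (v : Cn n) : Prop := ∀ l, (v l).re = 0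

/-- Complex conjugation (reflection at `ℝⁿ`) on `ℂⁿ`. -/
noncomputable def conjCn (n : ℕ) (v : Cn n) : Cn n := WithLp.toLp 2 (fun l => starRingEnd ℂ (v l))

/-- The Sobolev space `W^{k,2}([0,1], ℝ^{2n})`: `x` is (for `k ≥ 1`) an iterated
antiderivative of an `L²` function. -/
def WkPath (n : ℕ) : ℕ → (ℝ → Cn n) → Prop
  | 0, x => MemLp x 2 (volume.restrict (Ioo (0:ℝ) 1))
  | (k + 1), x => ∃ d : ℝ → Cn n, WkPath n k d ∧
      ∀ t ∈ Icc (0:ℝ) 1, x t = x 0 + ∫ s in (0:ℝ)..t, d s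

/-- The boundary conditions defining `W^{k,2}_{bc}([0,1],ℝ^{2n})`:
`∂ₜ^ℓ x(0), ∂ₜ^ℓ x(1) ∈ ℝⁿ` for even `ℓ ≤ k-1` and `∂ₜ^ℓ x(0), ∂ₜ^ℓ x(1) ∈ iℝⁿ` for odd
`ℓ ≤ k-1`. -/
def BC (n k : ℕ) (x : ℝ → Cn n) : Prop :=
  ∀ l < k,
    (Even l → RealVec n (iteratedDerivWithin l x (Icc (0:ℝ) 1) 0) ∧
      RealVec n (iteratedDerivWithin l x (Icc (0:ℝ) 1) 1)) ∧
    (Odd l → ImagVec n (iteratedDerivWithin l x (Icc (0:ℝ) 1) 0) ∧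
      ImagVec n (iteratedDerivWithin l x (Icc (0:ℝ) 1) 1))

end NLGF

namespace NLGF

/-- The loop `γ_x : ℝ/2ℤ → ℝ^{2n}` obtained by reflecting the path `x` at `ℝⁿ`:
`γ_x(t) = x(t)` for `t ∈ [0,1]` and `γ_x(t) = conj(x(2-t))` for `t ∈ [1,2]`, extended
`2`-periodically. -/
noncomputable def reflLoop (n : ℕ) (x : ℝ → Cn n) : ℝ → Cn n := fun t =>
  let s := t - 2 * ⌊t / 2⌋
  if s ≤ 1 then x s else conjCn n (x (2 - s))

/-- The Sobolev space `W^{k,2}(S¹(2), ℝ^{2n})` of loops on the circle `S¹(2) = ℝ/2ℤ` of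
length `2`. -/
def WkCirc (n : ℕ) : ℕ → (ℝ → Cn n) → Prop
  | 0, g => Function.Periodic g 2 ∧ MemLp g 2 (volume.restrict (Ioo (0:ℝ) 2))
  | (k + 1), g => Function.Periodic g 2 ∧ ∃ d : ℝ → Cn n, WkCirc n k d ∧
      ∀ t : ℝ, g t = g 0 + ∫ s in (0:ℝ)..t, d s

open intervalIntegral Function

lemma conjCn_add (n : ℕ) (a b : Cn n) : conjCn n (a + b) = conjCn n a + conjCn n b := by
  ext l; simp [conjCn]

lemma conjCn_sub (n : ℕ) (a b : Cn n) : conjCn n (a - b) = conjCn n a - conjCn n b := by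
  ext l; simp [conjCn]

lemma conjCn_smul (n : ℕ) (r : ℝ) (a : Cn n) : conjCn n (r • a) = r • conjCn n a := by
  ext l
  simp [conjCn, Complex.ext_iff]

lemma norm_conjCn (n : ℕ) (v : Cn n) : ‖conjCn n v‖ = ‖v‖ := by
  simp [conjCn, EuclideanSpace.norm_eq]

lemma conjCn_conjCn (n : ℕ) (v : Cn n) : conjCn n (conjCn n v) = v := by
  ext l; simp [conjCn]

lemma lipschitz_conjCn (n : ℕ) : LipschitzWith 1 (conjCn n) := by
  refine LipschitzWith.of_dist_le_mul fun a b => ?_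
  rw [NNReal.coe_one, one_mul, dist_eq_norm, dist_eq_norm, ← conjCn_sub, norm_conjCn]

noncomputable def conjL (n : ℕ) : Cn n →L[ℝ] Cn n :=
  LinearMap.toContinuousLinearMap
    { toFun := conjCn n
      map_add' := conjCn_add n
      map_smul' := fun r a => conjCn_smul n r a }

lemma conjL_apply (n : ℕ) (v : Cn n) : conjL n v = conjCn n v := rfl

/-- `ε • conj v = v`. -/
def Sym (n : ℕ) (ε : ℝ) (v : Cn n) : Prop := ε • conjCn n v = v

lemma Sym.sub {n : ℕ} {ε : ℝ} {v w : Cn n} (hv : Sym n ε v) (hw : Sym n ε w) :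
    Sym n ε (v - w) := by
  unfold Sym at *; rw [conjCn_sub, smul_sub, hv, hw]


noncomputable def rLoop (n : ℕ) (ε : ℝ) (x : ℝ → Cn n) : ℝ → Cn n := fun t =>
  let s := t - 2 * ⌊t / 2⌋
  if s ≤ 1 then x s else ε • conjCn n (x (2 - s))

lemma frac_add_two (t : ℝ) : (t + 2) - 2 * ⌊(t + 2) / 2⌋ = t - 2 * ⌊t / 2⌋ := by
  have : (t + 2) / 2 = t / 2 + 1 := by ring
  rw [this, Int.floor_add_one]
  push_cast
  ring

lemma rLoop_periodic (n : ℕ) (ε : ℝ) (x : ℝ → Cn n) : Periodic (rLoop n ε x) 2 := by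
  intro t
  simp only [rLoop, frac_add_two]

lemma floor_eq_zero_of_mem {t : ℝ} (h : t ∈ Ico (0:ℝ) 2) : ⌊t / 2⌋ = 0 := by
  rw [Int.floor_eq_zero_iff]
  constructor
  · linarith [h.1]
  · simp only [mem_Ico] at *; linarith [h.2]

lemma rLoop_left {n : ℕ} {ε : ℝ} {x : ℝ → Cn n} {t : ℝ} (h : t ∈ Icc (0:ℝ) 1) :
    rLoop n ε x t = x t := by
  have h0 : ⌊t / 2⌋ = 0 := floor_eq_zero_of_mem ⟨h.1, by linarith [h.2]⟩
  simp only [rLoop, h0]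
  norm_num
  intro h'
  exact absurd h.2 (by linarith)

lemma rLoop_right {n : ℕ} {ε : ℝ} {x : ℝ → Cn n} {t : ℝ} (h : t ∈ Ioo (1:ℝ) 2) :
    rLoop n ε x t = ε • conjCn n (x (2 - t)) := by
  have h0 : ⌊t / 2⌋ = 0 := floor_eq_zero_of_mem ⟨by linarith [h.1], h.2⟩
  simp only [rLoop, h0]
  norm_num
  intro h'
  exact absurd h.1 (by linarith)

lemma rLoop_two (n : ℕ) (ε : ℝ) (x : ℝ → Cn n) : rLoop n ε x 2 = x 0 := by
  have : ((2:ℝ) / 2) = 1 := by norm_num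
  simp only [rLoop, this]
  norm_num


lemma wkPath_integrableOn (n k : ℕ) (x : ℝ → Cn n) (h : WkPath n k x) :
    IntegrableOn x (Icc (0:ℝ) 1) := by
  induction k generalizing x with
  | zero =>
    have hfin : IsFiniteMeasure (volume.restrict (Ioo (0:ℝ) 1)) := by
      constructor
      rw [Measure.restrict_apply_univ]
      simp
    have hint : Integrable x (volume.restrict (Ioo (0:ℝ) 1)) :=
      h.integrable (by norm_num)
    have : volume.restrict (Ioo (0:ℝ) 1) = volume.restrict (Icc (0:ℝ) 1) :=
      Measure.restrict_congr_set Ioo_ae_eq_Icc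
    rwa [IntegrableOn, ← this]
  | succ k ih =>
    obtain ⟨d, hd, hrep⟩ := h
    have hdI : IntegrableOn d (Icc (0:ℝ) 1) := ih d hd
    have hdI' : IntegrableOn d (uIcc (0:ℝ) 1) := by rwa [uIcc_of_le (by norm_num : (0:ℝ) ≤ 1)]
    have hcont : ContinuousOn (fun t => x 0 + ∫ s in (0:ℝ)..t, d s) (Icc (0:ℝ) 1) := by
      have := (continuousOn_const (c := x 0)).add
        (intervalIntegral.continuousOn_primitive_interval hdI')
      rwa [uIcc_of_le (by norm_num : (0:ℝ) ≤ 1)] at this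
    exact (hcont.integrableOn_compact isCompact_Icc).congr_fun
      (fun t ht => (hrep t ht).symm) measurableSet_Icc

lemma wkPath_continuousOn (n k : ℕ) (x : ℝ → Cn n) (h : WkPath n (k+1) x) :
    ContinuousOn x (Icc (0:ℝ) 1) := by
  obtain ⟨d, hd, hrep⟩ := h
  have hdI : IntegrableOn d (Icc (0:ℝ) 1) := wkPath_integrableOn n k d hd
  have hdI' : IntegrableOn d (uIcc (0:ℝ) 1) := by rwa [uIcc_of_le (by norm_num : (0:ℝ) ≤ 1)]
  have hcont : ContinuousOn (fun t => x 0 + ∫ s in (0:ℝ)..t, d s) (Icc (0:ℝ) 1) := by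
    have := (continuousOn_const (c := x 0)).add
      (intervalIntegral.continuousOn_primitive_interval hdI')
    rwa [uIcc_of_le (by norm_num : (0:ℝ) ≤ 1)] at this
  exact hcont.congr hrep


lemma derivWithin_eq (n : ℕ) (x d : ℝ → Cn n)
    (hcont : ContinuousOn d (Icc (0:ℝ) 1)) (hdI : IntegrableOn d (Icc (0:ℝ) 1))
    (hrep : ∀ t ∈ Icc (0:ℝ) 1, x t = x 0 + ∫ s in (0:ℝ)..t, d s) :
    ∀ t ∈ Icc (0:ℝ) 1, derivWithin x (Icc (0:ℝ) 1) t = d t := by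
  intro t ht
  haveI : Fact (t ∈ Icc (0:ℝ) 1) := ⟨ht⟩
  have hii : IntervalIntegrable d volume 0 t := by
    rw [intervalIntegrable_iff_integrableOn_Ioc_of_le ht.1]
    exact hdI.mono_set (fun u hu => ⟨le_of_lt hu.1, le_trans hu.2 ht.2⟩)
  have hmeas : StronglyMeasurableAtFilter d (nhdsWithin t (Icc (0:ℝ) 1)) volume :=
    ⟨Icc (0:ℝ) 1, self_mem_nhdsWithin, hcont.aestronglyMeasurable measurableSet_Icc⟩
  have hF : HasDerivWithinAt (fun u => ∫ s in (0:ℝ)..u, d s) (d t) (Icc (0:ℝ) 1) t :=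
    intervalIntegral.integral_hasDerivWithinAt_right hii hmeas (hcont t ht)
  have hF' : HasDerivWithinAt (fun u => x 0 + ∫ s in (0:ℝ)..u, d s) (d t) (Icc (0:ℝ) 1) t :=
    hF.const_add _
  have hx : HasDerivWithinAt x (d t) (Icc (0:ℝ) 1) t :=
    hF'.congr (fun y hy => hrep y hy) (hrep t ht)
  exact hx.derivWithin ((uniqueDiffOn_Icc (by norm_num : (0:ℝ) < 1)) t ht)



lemma periodic_II (n : ℕ) {f : ℝ → Cn n} (hp : Periodic f 2)
    (h : IntervalIntegrable f volume 0 2) :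
    ∀ a b : ℝ, IntervalIntegrable f volume a b := by
  have h2 : ∀ k : ℤ, IntervalIntegrable f volume (2*k) (2*k+2) := by
    intro k
    have h' := h.comp_sub_right (2*k)
    have heq : (fun x => f (x - 2*(k:ℝ))) = f := by
      funext x
      rw [mul_comm]
      exact hp.sub_int_mul_eq k
    rw [heq] at h'
    have e1 : (0:ℝ) + 2*(k:ℝ) = 2*k := by ring
    have e2 : (2:ℝ) + 2*(k:ℝ) = 2*k + 2 := by ring
    rw [e2, e1] at h'
    exact h'
  have h3 : ∀ m : ℕ, IntervalIntegrable f volume (-(2*(m:ℝ))) (2*m) := by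
    intro m
    induction m with
    | zero =>
      rw [intervalIntegrable_iff]
      norm_num
    | succ m ih =>
      have ha : IntervalIntegrable f volume (-(2*((m:ℝ)+1))) (-(2*m)) := by
        have h' := h2 (-(m+1))
        have e1 : 2*(((-((m:ℤ)+1)):ℤ):ℝ) = -(2*((m:ℝ)+1)) := by push_cast; ring
        have e2 : 2*(((-((m:ℤ)+1)):ℤ):ℝ) + 2 = -(2*(m:ℝ)) := by push_cast; ring
        rw [e2, e1] at h'
        exact h'
      have hb : IntervalIntegrable f volume (2*m) (2*((m:ℝ)+1)) := by
        have h' := h2 m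
        have e1 : 2*(((m:ℤ)):ℝ) = 2*(m:ℝ) := by push_cast; ring
        have e2 : 2*(((m:ℤ)):ℝ) + 2 = 2*((m:ℝ)+1) := by push_cast; ring
        rw [e2, e1] at h'
        exact h'
      push_cast
      exact (ha.trans ih).trans hb
  intro a b
  obtain ⟨M, hM⟩ := exists_nat_ge (max |a| |b|)
  have haM : |a| ≤ 2*M := le_trans (le_trans (le_max_left _ _) hM) (by linarith [Nat.cast_nonneg (α := ℝ) M])
  have hbM : |b| ≤ 2*M := le_trans (le_trans (le_max_right _ _) hM) (by linarith [Nat.cast_nonneg (α := ℝ) M])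
  refine (h3 M).mono_set ?_
  rw [uIcc_of_le (by linarith [abs_nonneg a] : -(2*(M:ℝ)) ≤ 2*M)]
  intro u hu
  rcases abs_le.mp haM with ⟨ha1, ha2⟩
  rcases abs_le.mp hbM with ⟨hb1, hb2⟩
  rcases mem_uIcc.mp hu with ⟨h1, h2⟩ | ⟨h1, h2⟩ <;>
    exact mem_Icc.mpr ⟨by linarith, by linarith⟩


lemma key (n : ℕ) (ε : ℝ) (x d : ℝ → Cn n)
    (hd : IntegrableOn d (Icc (0:ℝ) 1))
    (hrep : ∀ t ∈ Icc (0:ℝ) 1, x t = x 0 + ∫ s in (0:ℝ)..t, d s)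
    (h0 : ε • conjCn n (x 0) = x 0) (h1 : ε • conjCn n (x 1) = x 1) :
    ∀ t : ℝ, rLoop n ε x t = x 0 + ∫ s in (0:ℝ)..t, rLoop n (-ε) d s := by
  set D : ℝ → Cn n := rLoop n (-ε) d with hD
  have hDd : ∀ u ∈ Icc (0:ℝ) 1, D u = d u := fun u hu => rLoop_left hu
  have hd01 : IntervalIntegrable d volume 0 1 := by
    rw [intervalIntegrable_iff_integrableOn_Ioc_of_le zero_le_one]
    exact hd.mono_set Ioc_subset_Icc_self
  have hD01 : IntervalIntegrable D volume 0 1 := by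
    rw [intervalIntegrable_iff_integrableOn_Ioc_of_le zero_le_one] at hd01 ⊢
    exact hd01.congr_fun
      (fun u hu => (hDd u ⟨le_of_lt hu.1, hu.2⟩).symm) measurableSet_Ioc
  have hd12 : IntervalIntegrable (fun u => d (2 - u)) volume 1 2 := by
    have h' := (hd01.comp_sub_left 2).symm
    norm_num at h'
    exact h'
  have hg12 : IntervalIntegrable (fun u => (-ε) • conjCn n (d (2 - u))) volume 1 2 := by
    have hL : (fun u => (-ε) • conjCn n (d (2 - u)))
        = fun u => ((-ε) • conjL n) (d (2 - u)) := rfl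
    rw [hL, intervalIntegrable_iff] at *
    exact ((-ε) • conjL n).integrable_comp hd12
  have hD12 : IntervalIntegrable D volume 1 2 := by
    rw [intervalIntegrable_iff_integrableOn_Ioc_of_le one_le_two] at hg12 ⊢
    have hres : (volume.restrict (Ioc (1:ℝ) 2)) = volume.restrict (Ioo (1:ℝ) 2) :=
      (Measure.restrict_congr_set Ioo_ae_eq_Ioc).symm
    show Integrable D (volume.restrict (Ioc (1:ℝ) 2))
    rw [hres]
    exact (hg12.mono_set Ioo_subset_Ioc_self).congr_fun
      (fun u hu => (rLoop_right hu).symm) measurableSet_Ioo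
  have hD02 : IntervalIntegrable D volume 0 2 := hD01.trans hD12
  have hDper : Periodic D 2 := rLoop_periodic n (-ε) d
  have hIIall := periodic_II n hDper hD02
  have hint1 : ∀ t ∈ Icc (0:ℝ) 1, ∫ s in (0:ℝ)..t, D s = x t - x 0 := by
    intro t ht
    have he : ∫ s in (0:ℝ)..t, D s = ∫ s in (0:ℝ)..t, d s := by
      apply intervalIntegral.integral_congr
      intro u hu
      rw [uIcc_of_le ht.1] at hu
      exact hDd u ⟨hu.1, le_trans hu.2 ht.2⟩
    rw [he, hrep t ht]
    abel
  have hint2 : ∀ t ∈ Icc (1:ℝ) 2, ∫ s in (1:ℝ)..t, D s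
      = (-ε) • conjCn n (x 1 - x (2 - t)) := by
    intro t ht
    have hd2t : IntervalIntegrable (fun s => d (2 - s)) volume 1 t := by
      refine hd12.mono_set ?_
      rw [uIcc_of_le ht.1, uIcc_of_le one_le_two]
      exact Icc_subset_Icc le_rfl ht.2
    have e1 : ∫ s in (1:ℝ)..t, D s = ∫ s in (1:ℝ)..t, (-ε) • conjCn n (d (2 - s)) := by
      apply intervalIntegral.integral_congr_ae
      have h2 : ∀ᵐ s : ℝ ∂volume, s ≠ (2:ℝ) := by
        refine compl_mem_ae_iff.mpr ?_
        exact measure_mono_null (fun s hs => hs) (measure_singleton (2:ℝ))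
      filter_upwards [h2] with s hs hmem
      rw [uIoc_of_le ht.1] at hmem
      have : s ∈ Ioo (1:ℝ) 2 := ⟨hmem.1, lt_of_le_of_ne (le_trans hmem.2 ht.2) hs⟩
      exact rLoop_right this
    have e2 : ∫ s in (1:ℝ)..t, conjCn n (d (2 - s))
        = conjL n (∫ s in (1:ℝ)..t, d (2 - s)) :=
      (conjL n).intervalIntegral_comp_comm hd2t
    have e3 : ∫ s in (1:ℝ)..t, d (2 - s) = ∫ s in (2-t)..(1:ℝ), d s := by
      rw [intervalIntegral.integral_comp_sub_left (a := (1:ℝ)) (b := t) d 2]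
      norm_num
    have e4 : ∫ s in (2-t)..(1:ℝ), d s = x 1 - x (2 - t) := by
      have m1 : (2 - t) ∈ Icc (0:ℝ) 1 := ⟨by linarith [ht.2], by linarith [ht.1]⟩
      have i1 : IntervalIntegrable d volume 0 (2-t) := by
        refine hd01.mono_set ?_
        rw [uIcc_of_le m1.1, uIcc_of_le zero_le_one]
        exact Icc_subset_Icc le_rfl m1.2
      have i2 : IntervalIntegrable d volume (2-t) 1 := by
        refine hd01.mono_set ?_
        rw [uIcc_of_le m1.2, uIcc_of_le zero_le_one]
        exact Icc_subset_Icc m1.1 le_rfl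
      have hadd := intervalIntegral.integral_add_adjacent_intervals i1 i2
      have r1 := hrep 1 (by norm_num)
      have r2 := hrep (2-t) m1
      have : ∫ s in (2-t)..(1:ℝ), d s
          = (∫ s in (0:ℝ)..1, d s) - ∫ s in (0:ℝ)..(2-t), d s := by
        rw [← hadd]; abel
      rw [this, r1, r2]
      abel
    rw [e1, intervalIntegral.integral_smul, e2, e3, e4]
    rfl
  have hγ : ∀ t ∈ Icc (0:ℝ) 2, rLoop n ε x t = x 0 + ∫ s in (0:ℝ)..t, D s := by
    intro t ht
    by_cases hle : t ≤ 1
    · rw [rLoop_left ⟨ht.1, hle⟩, hint1 t ⟨ht.1, hle⟩]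
      abel
    · push_neg at hle
      have h12 : t ∈ Icc (1:ℝ) 2 := ⟨le_of_lt hle, ht.2⟩
      have hsplit : ∫ s in (0:ℝ)..t, D s = (∫ s in (0:ℝ)..1, D s) + ∫ s in (1:ℝ)..t, D s :=
        (intervalIntegral.integral_add_adjacent_intervals (hIIall 0 1) (hIIall 1 t)).symm
      have hx2t : rLoop n ε x t = ε • conjCn n (x (2 - t)) := by
        rcases eq_or_lt_of_le ht.2 with h2 | h2
        · rw [h2, rLoop_two]
          norm_num
          exact h0.symm
        · exact rLoop_right ⟨hle, h2⟩
      rw [hsplit, hint1 1 ⟨zero_le_one, le_rfl⟩, hint2 t h12, hx2t, conjCn_sub, smul_sub]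
      simp only [neg_smul]
      rw [h1]
      abel
  have hzero : ∫ s in (0:ℝ)..2, D s = 0 := by
    have h2 := hγ 2 ⟨by norm_num, le_refl 2⟩
    rw [rLoop_two] at h2
    exact (left_eq_add.mp h2)
  have hFper : ∀ t : ℝ, ∫ s in (0:ℝ)..(t+2), D s = ∫ s in (0:ℝ)..t, D s := by
    intro t
    have h2 : ∫ s in t..(t+2), D s = 0 := by
      rw [hDper.intervalIntegral_add_eq t 0, zero_add, hzero]
    rw [← intervalIntegral.integral_add_adjacent_intervals (hIIall 0 t) (hIIall t (t+2)),
      h2, add_zero]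
  have hFadd : ∀ (m : ℤ) (t : ℝ), ∫ s in (0:ℝ)..(t + 2*m), D s = ∫ s in (0:ℝ)..t, D s := by
    intro m
    induction m using Int.induction_on with
    | zero => intro t; norm_num
    | succ k ih =>
      intro t
      have e : t + 2*(((k:ℤ)+1 : ℤ) : ℝ) = (t + 2*(k:ℤ)) + 2 := by push_cast; ring
      rw [e, hFper, ih]
    | pred k ih =>
      intro t
      have e : t + 2*(((-(k:ℤ)-1 : ℤ)) : ℝ) = (t + 2*((-(k:ℤ) : ℤ) : ℝ)) - 2 := by
        push_cast; ring
      rw [e, ← ih t]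
      set u := t + 2*((-(k:ℤ) : ℤ) : ℝ) with hu
      have := hFper (u - 2)
      rw [sub_add_cancel] at this
      rw [this]
  intro t
  set m := ⌊t / 2⌋ with hm
  have hml : (m:ℝ) ≤ t / 2 := Int.floor_le (t/2)
  have hmu : t / 2 < m + 1 := Int.lt_floor_add_one (t/2)
  have hmem : t - 2*m ∈ Ico (0:ℝ) 2 := ⟨by linarith, by linarith⟩
  have hper : rLoop n ε x t = rLoop n ε x (t - 2*m) := by
    have := (rLoop_periodic n ε x).sub_int_mul_eq (x := t) m
    rw [mul_comm (m:ℝ) 2] at this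
    exact this.symm
  have hint : ∫ s in (0:ℝ)..(t - 2*m), D s = ∫ s in (0:ℝ)..t, D s := by
    have := hFadd (-m) t
    have e : t + 2*((-m : ℤ) : ℝ) = t - 2*m := by push_cast; ring
    rw [e] at this
    exact this
  rw [hper, hγ (t - 2*m) ⟨hmem.1, le_of_lt hmem.2⟩, hint]


lemma conjCn_zero (n : ℕ) : conjCn n 0 = 0 := by
  ext l; simp [conjCn]

lemma rLoop_mem_L2 (n : ℕ) (σ : ℝ) (d : ℝ → Cn n)
    (hd : MemLp d 2 (volume.restrict (Ioo (0:ℝ) 1))) :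
    MemLp (rLoop n σ d) 2 (volume.restrict (Ioo (0:ℝ) 2)) := by
  set g : ℝ → Cn n := fun u => σ • conjCn n (d (2 - u)) with hg_def
  have hd1 : MemLp d 2 (volume.restrict (Ioc (0:ℝ) 1)) := by
    rwa [← Measure.restrict_congr_set Ioo_ae_eq_Ioc]
  have hg : MemLp g 2 (volume.restrict (Ioo (1:ℝ) 2)) := by
    have mp : MeasurePreserving (fun t : ℝ => 2 - t) volume volume :=
      Measure.measurePreserving_sub_left volume 2
    have hpre : (fun t : ℝ => 2 - t) ⁻¹' (Ioo (0:ℝ) 1) = Ioo (1:ℝ) 2 := by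
      ext u
      simp only [mem_preimage, mem_Ioo]
      constructor <;> rintro ⟨a, b⟩ <;> constructor <;> linarith
    have mp2 : MeasurePreserving (fun t : ℝ => 2 - t)
        (volume.restrict (Ioo (1:ℝ) 2)) (volume.restrict (Ioo (0:ℝ) 1)) := by
      have := mp.restrict_preimage (s := Ioo (0:ℝ) 1) measurableSet_Ioo
      rwa [hpre] at this
    have hcomp : MemLp (d ∘ fun t : ℝ => 2 - t) 2 (volume.restrict (Ioo (1:ℝ) 2)) :=
      hd.comp_measurePreserving mp2
    have hconj : MemLp (conjCn n ∘ (d ∘ fun t : ℝ => 2 - t)) 2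
        (volume.restrict (Ioo (1:ℝ) 2)) :=
      (lipschitz_conjCn n).comp_memLp (conjCn_zero n) hcomp
    exact hconj.const_smul σ
  have hsum : (Ioo (0:ℝ) 2).indicator (rLoop n σ d)
      = (Ioc (0:ℝ) 1).indicator d + (Ioo (1:ℝ) 2).indicator g := by
    funext u
    by_cases h1 : u ∈ Ioc (0:ℝ) 1
    · have hu2 : u ∈ Ioo (0:ℝ) 2 := ⟨h1.1, by linarith [h1.2]⟩
      have hn2 : u ∉ Ioo (1:ℝ) 2 := fun h => absurd h1.2 (not_le.mpr h.1)
      rw [Pi.add_apply, indicator_of_mem hu2, indicator_of_mem h1, indicator_of_notMem hn2,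
        add_zero]
      exact rLoop_left ⟨le_of_lt h1.1, h1.2⟩
    · by_cases h2 : u ∈ Ioo (1:ℝ) 2
      · have hu2 : u ∈ Ioo (0:ℝ) 2 := ⟨by linarith [h2.1], h2.2⟩
        rw [Pi.add_apply, indicator_of_mem hu2, indicator_of_notMem h1, indicator_of_mem h2,
          zero_add]
        exact rLoop_right h2
      · have hu2 : u ∉ Ioo (0:ℝ) 2 := by
          intro h
          rcases le_or_gt u 1 with h' | h'
          · exact h1 ⟨h.1, h'⟩
          · exact h2 ⟨h', h.2⟩
        rw [Pi.add_apply, indicator_of_notMem hu2, indicator_of_notMem h1,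
          indicator_of_notMem h2, add_zero]
  rw [← memLp_indicator_iff_restrict measurableSet_Ioo, hsum]
  exact ((memLp_indicator_iff_restrict measurableSet_Ioc).2 hd1).add
    ((memLp_indicator_iff_restrict measurableSet_Ioo).2 hg)


def BCE (n : ℕ) (ε : ℝ) (k : ℕ) (x : ℝ → Cn n) : Prop :=
  ∀ l < k,
    ((-1:ℝ)^l * ε) • conjCn n (iteratedDerivWithin l x (Icc (0:ℝ) 1) 0)
      = iteratedDerivWithin l x (Icc (0:ℝ) 1) 0 ∧
    ((-1:ℝ)^l * ε) • conjCn n (iteratedDerivWithin l x (Icc (0:ℝ) 1) 1)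
      = iteratedDerivWithin l x (Icc (0:ℝ) 1) 1

lemma real_sym (n : ℕ) (v : Cn n) (h : RealVec n v) : (1:ℝ) • conjCn n v = v := by
  rw [one_smul]
  ext l
  have := h l
  simp [conjCn, Complex.ext_iff, this]

lemma imag_sym (n : ℕ) (v : Cn n) (h : ImagVec n v) : ((-1):ℝ) • conjCn n v = v := by
  ext l
  have := h l
  show ((-1:ℝ) • conjCn n v) l = v l
  simp [conjCn, Complex.ext_iff, Complex.real_smul, this]

lemma bc_to_bce (n k : ℕ) (x : ℝ → Cn n) (h : BC n k x) : BCE n 1 k x := by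
  intro l hl
  rcases Nat.even_or_odd l with he | ho
  · obtain ⟨h0, h1⟩ := (h l hl).1 he
    have hpow : ((-1:ℝ)^l * 1) = 1 := by rw [he.neg_one_pow, mul_one]
    rw [hpow]
    exact ⟨real_sym n _ h0, real_sym n _ h1⟩
  · obtain ⟨h0, h1⟩ := (h l hl).2 ho
    have hpow : ((-1:ℝ)^l * 1) = -1 := by rw [ho.neg_one_pow, mul_one]
    rw [hpow]
    exact ⟨imag_sym n _ h0, imag_sym n _ h1⟩

lemma bce_step (n k : ℕ) (ε : ℝ) (x d : ℝ → Cn n)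
    (hcont : ContinuousOn d (Icc (0:ℝ) 1)) (hdI : IntegrableOn d (Icc (0:ℝ) 1))
    (hrep : ∀ t ∈ Icc (0:ℝ) 1, x t = x 0 + ∫ s in (0:ℝ)..t, d s)
    (hbce : BCE n ε (k+1) x) : BCE n (-ε) k d := by
  have hudo : UniqueDiffOn ℝ (Icc (0:ℝ) 1) := uniqueDiffOn_Icc (by norm_num)
  have hder : EqOn (derivWithin x (Icc (0:ℝ) 1)) d (Icc (0:ℝ) 1) :=
    fun t ht => derivWithin_eq n x d hcont hdI hrep t ht
  intro l hl
  have h := hbce (l+1) (by omega)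
  have hkey : ∀ p ∈ Icc (0:ℝ) 1,
      iteratedDerivWithin (l+1) x (Icc (0:ℝ) 1) p = iteratedDerivWithin l d (Icc (0:ℝ) 1) p := by
    intro p hp
    rw [iteratedDerivWithin_succ']
    exact iteratedDerivWithin_congr hder hp
  have e0 := hkey 0 ⟨le_rfl, zero_le_one⟩
  have e1 := hkey 1 ⟨zero_le_one, le_rfl⟩
  rw [e0, e1] at h
  have hpow : ((-1:ℝ)^(l+1) * ε) = (-1:ℝ)^l * (-ε) := by ring
  rw [hpow] at h
  exact h

lemma main_ind (n : ℕ) : ∀ (k : ℕ) (ε : ℝ) (x : ℝ → Cn n),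
    WkPath n (k+1) x → BCE n ε (k+1) x → WkCirc n (k+1) (rLoop n ε x) := by
  intro k
  induction k with
  | zero =>
    intro ε x hx hbce
    obtain ⟨d, hd, hrep⟩ := hx
    have hdI : IntegrableOn d (Icc (0:ℝ) 1) := wkPath_integrableOn n 0 d hd
    obtain ⟨hh0, hh1⟩ := hbce 0 (by norm_num)
    rw [pow_zero, one_mul, iteratedDerivWithin_zero] at hh0 hh1
    have hkey := key n ε x d hdI hrep hh0 hh1
    refine ⟨rLoop_periodic n ε x, rLoop n (-ε) d,
      ⟨rLoop_periodic n (-ε) d, rLoop_mem_L2 n (-ε) d hd⟩, ?_⟩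
    intro t
    have h00 : rLoop n ε x 0 = x 0 := rLoop_left ⟨le_rfl, zero_le_one⟩
    rw [h00]
    exact hkey t
  | succ k ih =>
    intro ε x hx hbce
    obtain ⟨d, hd, hrep⟩ := hx
    have hdI : IntegrableOn d (Icc (0:ℝ) 1) := wkPath_integrableOn n (k+1) d hd
    have hcont : ContinuousOn d (Icc (0:ℝ) 1) := wkPath_continuousOn n k d hd
    obtain ⟨hh0, hh1⟩ := hbce 0 (by omega)
    rw [pow_zero, one_mul, iteratedDerivWithin_zero] at hh0 hh1
    have hkey := key n ε x d hdI hrep hh0 hh1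
    refine ⟨rLoop_periodic n ε x, rLoop n (-ε) d,
      ih (-ε) d hd (bce_step n (k+1) ε x d hcont hdI hrep hbce), ?_⟩
    intro t
    have h00 : rLoop n ε x 0 = x 0 := rLoop_left ⟨le_rfl, zero_le_one⟩
    rw [h00]
    exact hkey t

lemma reflLoop_eq (n : ℕ) (x : ℝ → Cn n) : reflLoop n x = rLoop n 1 x := by
  funext t
  simp only [reflLoop, rLoop, one_smul]

lemma refl_symm (n : ℕ) (x : ℝ → Cn n)
    (h0 : conjCn n (x 0) = x 0) (h1 : conjCn n (x 1) = x 1) :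
    ∀ t ∈ Icc (0:ℝ) 2, rLoop n 1 x (2 - t) = conjCn n (rLoop n 1 x t) := by
  intro t ht
  rcases lt_trichotomy t 1 with h | h | h
  · rcases eq_or_lt_of_le ht.1 with h0' | h0'
    · rw [← h0']
      norm_num
      rw [rLoop_two, rLoop_left (⟨le_rfl, zero_le_one⟩ : (0:ℝ) ∈ Icc (0:ℝ) 1), h0]
    · have hmem : 2 - t ∈ Ioo (1:ℝ) 2 := ⟨by linarith, by linarith⟩
      rw [rLoop_right hmem, rLoop_left ⟨ht.1, le_of_lt h⟩, one_smul]
      norm_num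
  · rw [h]
    norm_num
    rw [rLoop_left (⟨zero_le_one, le_rfl⟩ : (1:ℝ) ∈ Icc (0:ℝ) 1), h1]
  · rcases eq_or_lt_of_le ht.2 with h2 | h2
    · rw [h2]
      norm_num
      rw [rLoop_two, rLoop_left (⟨le_rfl, zero_le_one⟩ : (0:ℝ) ∈ Icc (0:ℝ) 1), h0]
    · have hmem : 2 - t ∈ Icc (0:ℝ) 1 := ⟨by linarith, by linarith⟩
      rw [rLoop_left hmem, rLoop_right ⟨h, h2⟩, one_smul, conjCn_conjCn]

/-- **Reflection at `ℝⁿ` (from the proof of Lemma 5.4).** Let `k ≥ 1` and let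
`x ∈ W^{k,2}([0,1],ℝ^{2n})` satisfy the boundary conditions
`∂ₜ^ℓ x(0), ∂ₜ^ℓ x(1) ∈ ℝⁿ` for even `ℓ ≤ k-1` and `∂ₜ^ℓ x(0), ∂ₜ^ℓ x(1) ∈ iℝⁿ` for odd
`ℓ ≤ k-1`. Then the reflected loop `γ_x` lies in `W^{k,2}(S¹(2),ℝ^{2n})` and satisfies
`γ_x(2-t) = conj(γ_x(t))` for all `t ∈ [0,2]`. -/
theorem reflLoop_Wk2 (n k : ℕ) (hk : 1 ≤ k) (x : ℝ → Cn n)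
    (hx : WkPath n k x) (hbc : BC n k x) :
    WkCirc n k (reflLoop n x) ∧
    ∀ t ∈ Icc (0:ℝ) 2, reflLoop n x (2 - t) = conjCn n (reflLoop n x t) := by
  obtain ⟨k', rfl⟩ : ∃ k', k = k' + 1 := ⟨k - 1, (Nat.succ_pred_eq_of_pos hk).symm⟩
  have hbce := bc_to_bce n (k'+1) x hbc
  constructor
  · rw [reflLoop_eq]
    exact main_ind n k' 1 x hx hbce
  · obtain ⟨hh0, hh1⟩ := hbce 0 (by omega)
    rw [pow_zero, one_mul, iteratedDerivWithin_zero, one_smul] at hh0 hh1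
    rw [reflLoop_eq]
    exact refl_symm n x hh0 hh1


end NLGF
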